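/- Assume F is additionally sequentially weak-to-weak continuous on bounded subsets of H. Suppose there is a subsequence (x^{k_j})_{j∈ℕ} of the FBF iterates (x^k)_{k≥0} converging weakly to a point x̂, and let (z^{k_j})_{j∈ℕ} be the corresponding subsequence of (z^k)_{k≥0}. If lim_{j→∞} ‖x^{k_j} − z^{k_j}‖ = 0, then x̂ ∈ X*, i.e. x̂ is a solution of VI(X,F). -/

import Mathlib

open scoped RealInnerProductSpace
open Filter

set_option maxHeartbeats 1000000 in
/-- Weak sequential cluster points of the FBF iterates along which the residual
vanishes are solutions of the variational inequality. -/
theorem fbf_weak_cluster_point_is_solution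
    {H : Type*} [NormedAddCommGroup H] [InnerProductSpace ℝ H] [CompleteSpace H]
    (X : Set H) (hXne : X.Nonempty) (hXcl : IsClosed X) (hXconv : Convex ℝ X)
    (F : H → H) (L : ℝ) (hL : 0 < L)
    (hLip : ∀ x y : H, ‖F x - F y‖ ≤ L * ‖x - y‖)
    (hPM : ∀ x ∈ X, ∀ y ∈ X, 0 ≤ ⟪F x, y - x⟫ → 0 ≤ ⟪F y, y - x⟫)
    (hFww : ∀ (u : ℕ → H) (v : H), Bornology.IsBounded (Set.range u) →
      (∀ w : H, Tendsto (fun n => ⟪u n, w⟫) atTop (nhds ⟪v, w⟫)) →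
      ∀ w : H, Tendsto (fun n => ⟪F (u n), w⟫) atTop (nhds ⟪F v, w⟫))
    (Xstar : Set H)
    (hXstar : Xstar = {y | y ∈ X ∧ ∀ w ∈ X, 0 ≤ ⟪F y, w - y⟫})
    (hXstarNe : Xstar.Nonempty) (hXstarCl : IsClosed Xstar) (hXstarConv : Convex ℝ Xstar)
    (γ : ℝ) (hγ : γ ∈ Set.Ioo 0 (1 / L))
    (α β : ℕ → ℝ) (hα : ∀ k, α k ∈ Set.Ioo (0 : ℝ) 1) (hβ : ∀ k, β k ∈ Set.Ioo (0 : ℝ) 1)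
    (x z r : ℕ → H) (hx0 : x 0 ∈ X)
    -- `z k = P_X (x k - γ F (x k))`, via the variational characterization of the projection
    (hz : ∀ k, z k ∈ X ∧ ∀ y ∈ X, 0 ≤ ⟪(x k - γ • F (x k)) - z k, z k - y⟫)
    (hr : ∀ k, r k = z k + γ • (F (x k) - F (z k)))
    (hxs : ∀ k, x (k + 1) = (1 - α k - β k) • x k + β k • r k)
    (κ : ℕ → ℕ) (hκ : StrictMono κ) (xhat : H)
    (hweak : ∀ u : H, Tendsto (fun j => ⟪x (κ j), u⟫) atTop (nhds ⟪xhat, u⟫))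
    (hres : Tendsto (fun j => ‖x (κ j) - z (κ j)‖) atTop (nhds 0)) :
    xhat ∈ Xstar := by
  obtain ⟨hγ0, hγ1⟩ := hγ
  set ξ : ℕ → H := fun j => x (κ j) with hξ
  set ζ : ℕ → H := fun j => z (κ j) with hζ
  set ε : ℕ → ℝ := fun j => ‖ξ j - ζ j‖ with hε
  have hε0 : ∀ j, 0 ≤ ε j := fun j => norm_nonneg _
  have hζX : ∀ j, ζ j ∈ X := fun j => (hz (κ j)).1
  -- weak convergence of ζ to xhat
  have hweakζ : ∀ u : H, Tendsto (fun j => ⟪ζ j, u⟫) atTop (nhds ⟪xhat, u⟫) := by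
    intro u
    have h1 : Tendsto (fun j => ⟪ζ j - ξ j, u⟫) atTop (nhds 0) := by
      refine squeeze_zero_norm (a := fun j => ε j * ‖u‖) (fun j => ?_)
        (by simpa using hres.mul_const ‖u‖)
      have h2 : ‖⟪ζ j - ξ j, u⟫‖ ≤ ‖ζ j - ξ j‖ * ‖u‖ := abs_real_inner_le_norm _ _
      have h3 : ‖ζ j - ξ j‖ = ε j := norm_sub_rev _ _
      rw [h3] at h2
      exact h2
    have := (hweak u).add h1
    simp only [add_zero] at this
    convert this using 2 with j
    rw [← inner_add_left]
    congr 1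
    abel
  -- xhat belongs to X
  have hxhatX : xhat ∈ X := by
    obtain ⟨p, hpX, hp⟩ :=
      exists_norm_eq_iInf_of_complete_convex hXne (hXcl.isComplete) hXconv xhat
    have hchar := (norm_eq_iInf_iff_real_inner_le_zero hXconv hpX).mp hp
    have hto : Tendsto (fun j => ⟪xhat - p, ζ j - p⟫) atTop
        (nhds ⟪xhat - p, xhat - p⟫) := by
      have h1 : Tendsto (fun j => ⟪ζ j, xhat - p⟫ - ⟪p, xhat - p⟫) atTop
          (nhds (⟪xhat, xhat - p⟫ - ⟪p, xhat - p⟫)) := (hweakζ (xhat - p)).sub_const _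
      convert h1 using 2 with j
      · rw [← inner_sub_left]; exact real_inner_comm _ _
      · rw [← inner_sub_left]
    have hle : ⟪xhat - p, xhat - p⟫ ≤ 0 :=
      le_of_tendsto hto (Eventually.of_forall fun j => hchar _ (hζX j))
    have : xhat - p = 0 := by
      have := real_inner_self_nonneg (x := xhat - p)
      have h0 : ⟪xhat - p, xhat - p⟫ = 0 := le_antisymm hle this
      exact inner_self_eq_zero.mp (by exact_mod_cast h0)
    have : xhat = p := by rwa [sub_eq_zero] at this
    rwa [this]
  -- boundedness of ξ via Banach–Steinhaus
  obtain ⟨M, hM⟩ : ∃ M, ∀ j, ‖ξ j‖ ≤ M := by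
    have h : ∀ u : H, ∃ C, ∀ j, ‖(innerSL ℝ (ξ j)) u‖ ≤ C := by
      intro u
      obtain ⟨C, hC⟩ := ((hweak u).norm).bddAbove_range
      exact ⟨C, fun j => hC ⟨j, rfl⟩⟩
    obtain ⟨C', hC'⟩ := banach_steinhaus h
    exact ⟨C', fun j => by simpa [innerSL_apply_norm] using hC' j⟩
  obtain ⟨E, hE⟩ : ∃ E, ∀ j, ε j ≤ E := by
    obtain ⟨E, hE⟩ := hres.bddAbove_range
    exact ⟨E, fun j => hE ⟨j, rfl⟩⟩
  set M' : ℝ := M + E with hM'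
  have hζbd : ∀ j, ‖ζ j‖ ≤ M' := by
    intro j
    calc ‖ζ j‖ = ‖ξ j - (ξ j - ζ j)‖ := by congr 1; abel
      _ ≤ ‖ξ j‖ + ‖ξ j - ζ j‖ := norm_sub_le _ _
      _ ≤ M + E := add_le_add (hM j) (hE j)
  -- weak convergence of F ∘ ζ to F xhat
  have hFz : ∀ v : H, Tendsto (fun j => ⟪F (ζ j), v⟫) atTop (nhds ⟪F xhat, v⟫) := by
    apply hFww ζ xhat
    · apply (Metric.isBounded_closedBall (x := (0 : H)) (r := M')).subset
      rintro - ⟨j, rfl⟩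
      simpa [Metric.mem_closedBall, dist_zero_right] using hζbd j
    · exact hweakζ
  -- the key residual inequality from the projection characterization
  have hproj : ∀ j, ∀ y ∈ X, ⟪ξ j - ζ j, y - ζ j⟫ ≤ γ * ⟪F (ξ j), y - ζ j⟫ := by
    intro j y hy
    have h := (hz (κ j)).2 y hy
    have heq : ⟪(ξ j - γ • F (ξ j)) - ζ j, ζ j - y⟫
        = -(⟪ξ j - ζ j, y - ζ j⟫ - γ * ⟪F (ξ j), y - ζ j⟫) := by
      simp only [inner_sub_left, inner_sub_right, real_inner_smul_left]
      ring
    rw [heq] at h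
    linarith
  have hkey : ∀ y ∈ X, ∀ j,
      -(((1 + γ * L) * (‖y‖ + M') / γ) * ε j) ≤ ⟪F (ζ j), y - ζ j⟫ := by
    intro y hy j
    have hb : ‖y - ζ j‖ ≤ ‖y‖ + M' := by
      calc ‖y - ζ j‖ ≤ ‖y‖ + ‖ζ j‖ := norm_sub_le _ _
        _ ≤ ‖y‖ + M' := by linarith [hζbd j]
    have h1 := hproj j y hy
    have h2 : -(ε j * ‖y - ζ j‖) ≤ ⟪ξ j - ζ j, y - ζ j⟫ := by
      have := abs_real_inner_le_norm (ξ j - ζ j) (y - ζ j)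
      have := neg_abs_le (⟪ξ j - ζ j, y - ζ j⟫)
      simp only [hε] at *
      linarith
    have h3 : ⟪F (ξ j) - F (ζ j), y - ζ j⟫ ≤ L * ε j * ‖y - ζ j‖ := by
      calc ⟪F (ξ j) - F (ζ j), y - ζ j⟫ ≤ ‖F (ξ j) - F (ζ j)‖ * ‖y - ζ j‖ :=
            real_inner_le_norm _ _
        _ ≤ (L * ε j) * ‖y - ζ j‖ :=
            mul_le_mul_of_nonneg_right (hLip _ _) (norm_nonneg _)
    have hsplit : ⟪F (ζ j), y - ζ j⟫
        = ⟪F (ξ j), y - ζ j⟫ - ⟪F (ξ j) - F (ζ j), y - ζ j⟫ := by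
      rw [inner_sub_left]; ring
    rw [div_mul_eq_mul_div, ← neg_div, div_le_iff₀ hγ0, hsplit]
    have hbε : ε j * ‖y - ζ j‖ ≤ ε j * (‖y‖ + M') :=
      mul_le_mul_of_nonneg_left hb (hε0 j)
    have hbε2 : L * ε j * ‖y - ζ j‖ * γ ≤ L * ε j * (‖y‖ + M') * γ :=
      mul_le_mul_of_nonneg_right (mul_le_mul_of_nonneg_left hb (by positivity)) hγ0.le
    nlinarith [mul_le_mul_of_nonneg_right h3 hγ0.le, h1, h2, hbε, hbε2]
  -- pick a solution x*
  obtain ⟨xs, hxsX⟩ := hXstarNe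
  rw [hXstar] at hxsX
  obtain ⟨hxsX, hxsSol⟩ := hxsX
  -- d_j := ⟪F ζ j, ζ j - x*⟫ is nonnegative and tends to 0
  set d : ℕ → ℝ := fun j => ⟪F (ζ j), ζ j - xs⟫ with hd
  have hd0 : ∀ j, 0 ≤ d j := fun j =>
    hPM xs hxsX (ζ j) (hζX j) (hxsSol _ (hζX j))
  have hdto : Tendsto d atTop (nhds 0) := by
    refine squeeze_zero (g := fun j => (1 + γ * L) * (‖xs‖ + M') / γ * ε j) hd0
      (fun j => ?_) (by simpa using hres.const_mul ((1 + γ * L) * (‖xs‖ + M') / γ))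
    have hk := hkey xs hxsX j
    have heq : ⟪F (ζ j), xs - ζ j⟫ = -(d j) := by
      simp only [hd]
      rw [← neg_sub (ζ j) xs, inner_neg_right]
    rw [heq] at hk
    linarith
  -- the "self" inner products converge
  set m : ℝ := ⟪F xhat, xhat - xs⟫ with hm
  have hinto : Tendsto (fun j => ⟪F (ζ j), ζ j - xhat⟫) atTop (nhds (-m)) := by
    have h1 : Tendsto (fun j => d j + ⟪F (ζ j), xs - xhat⟫) atTop
        (nhds (0 + ⟪F xhat, xs - xhat⟫)) := hdto.add (hFz (xs - xhat))
    have heq : ∀ j, ⟪F (ζ j), ζ j - xhat⟫ = d j + ⟪F (ζ j), xs - xhat⟫ := by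
      intro j
      rw [hd, ← inner_add_right, sub_add_sub_cancel]
    have hval : (0 : ℝ) + ⟪F xhat, xs - xhat⟫ = -m := by
      rw [hm, zero_add, ← inner_neg_right, neg_sub]
    rw [← hval]
    simpa only [heq] using h1
  have hm0 : 0 ≤ m := hPM xs hxsX xhat hxhatX (hxsSol _ hxhatX)
  -- show m = 0
  have hmzero : m = 0 := by
    rcases eq_or_lt_of_le hm0 with h | h
    · exact h.symm
    exfalso
    have hstep : ∀ t : ℝ, 0 < t → t < 1 → m ≤ L * ‖xs - xhat‖ ^ 2 * t := by
      intro t ht0 ht1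
      set yt : H := xhat + t • (xs - xhat) with hyt
      have hytX : yt ∈ X := by
        have := hXconv hxhatX hxsX (by linarith : (0:ℝ) ≤ 1 - t) ht0.le (by ring)
        convert this using 1
        rw [hyt, sub_smul, one_smul, smul_sub]
        abel
      -- ⟪F ζ j, yt - ζ j⟫ → (1 - t) * m > 0
      have hato : Tendsto (fun j => ⟪F (ζ j), yt - ζ j⟫) atTop (nhds ((1 - t) * m)) := by
        have h1 : Tendsto (fun j => (-(⟪F (ζ j), ζ j - xhat⟫)) + t * ⟪F (ζ j), xs - xhat⟫)
            atTop (nhds ((-(-m)) + t * ⟪F xhat, xs - xhat⟫)) :=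
          (hinto.neg).add ((hFz (xs - xhat)).const_mul t)
        have heq : ∀ j, ⟪F (ζ j), yt - ζ j⟫
            = (-(⟪F (ζ j), ζ j - xhat⟫)) + t * ⟪F (ζ j), xs - xhat⟫ := by
          intro j
          rw [← real_inner_smul_right, ← inner_neg_right, ← inner_add_right, neg_sub]
          congr 1
          rw [hyt]; abel
        have hval : (-(-m)) + t * ⟪F xhat, xs - xhat⟫ = (1 - t) * m := by
          have : ⟪F xhat, xs - xhat⟫ = -m := by rw [hm, ← inner_neg_right, neg_sub]
          rw [this]; ring
        rw [← hval]
        simpa only [heq] using h1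
      have hposlim : (0 : ℝ) < (1 - t) * m := mul_pos (by linarith) h
      have hev : ∀ᶠ j in atTop, 0 < ⟪F (ζ j), yt - ζ j⟫ :=
        hato.eventually (eventually_gt_nhds hposlim)
      have hev2 : ∀ᶠ j in atTop, 0 ≤ ⟪F yt, yt - ζ j⟫ :=
        hev.mono fun j hj => hPM (ζ j) (hζX j) yt hytX hj.le
      have hto2 : Tendsto (fun j => ⟪F yt, yt - ζ j⟫) atTop (nhds ⟪F yt, yt - xhat⟫) := by
        have h1 : Tendsto (fun j => ⟪F yt, yt⟫ - ⟪ζ j, F yt⟫) atTop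
            (nhds (⟪F yt, yt⟫ - ⟪xhat, F yt⟫)) := tendsto_const_nhds.sub (hweakζ (F yt))
        have heq : ∀ j : ℕ, ⟪F yt, yt - ζ j⟫ = ⟪F yt, yt⟫ - ⟪ζ j, F yt⟫ := by
          intro j; rw [inner_sub_right, real_inner_comm (ζ j)]
        have hval : ⟪F yt, yt⟫ - ⟪xhat, F yt⟫ = ⟪F yt, yt - xhat⟫ := by
          rw [inner_sub_right, real_inner_comm xhat]
        rw [← hval]
        simpa only [heq] using h1
      have hge : 0 ≤ ⟪F yt, yt - xhat⟫ := ge_of_tendsto hto2 hev2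
      have hytsub : yt - xhat = t • (xs - xhat) := by rw [hyt]; abel
      have hge2 : 0 ≤ ⟪F yt, xs - xhat⟫ := by
        rw [hytsub, real_inner_smul_right] at hge
        by_contra hc
        push_neg at hc
        nlinarith [hge]
      -- Lipschitz estimate
      have hlip : ⟪F yt - F xhat, xs - xhat⟫ ≤ L * t * ‖xs - xhat‖ ^ 2 := by
        calc ⟪F yt - F xhat, xs - xhat⟫ ≤ ‖F yt - F xhat‖ * ‖xs - xhat‖ :=
              real_inner_le_norm _ _
          _ ≤ (L * ‖yt - xhat‖) * ‖xs - xhat‖ :=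
              mul_le_mul_of_nonneg_right (hLip _ _) (norm_nonneg _)
          _ = L * t * ‖xs - xhat‖ ^ 2 := by
              rw [hytsub, norm_smul, Real.norm_eq_abs, abs_of_pos ht0]; ring
      have hsplit : ⟪F yt, xs - xhat⟫ = ⟪F xhat, xs - xhat⟫ + ⟪F yt - F xhat, xs - xhat⟫ := by
        rw [inner_sub_left]; ring
      have hFxhat : ⟪F xhat, xs - xhat⟫ = -m := by rw [hm, ← inner_neg_right, neg_sub]
      nlinarith [hge2, hlip, hsplit, hFxhat]
    set K : ℝ := L * ‖xs - xhat‖ ^ 2 with hK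
    have hK0 : 0 ≤ K := by positivity
    have hKpos : (0 : ℝ) < 2 * (K + 1) := by positivity
    set s : ℝ := m / (2 * (K + 1)) with hsdef
    have hs0 : 0 < s := div_pos h hKpos
    have hsm : s * (2 * (K + 1)) = m := div_mul_cancel₀ _ (ne_of_gt hKpos)
    have ht := hstep (min (1/2) s) (lt_min (by norm_num) hs0)
      (lt_of_le_of_lt (min_le_left _ _) (by norm_num))
    have hmin : min (1/2) s ≤ s := min_le_right _ _
    have h1 : K * min (1/2) s ≤ K * s := mul_le_mul_of_nonneg_left hmin hK0
    have h2 : m ≤ K * s := ht.trans h1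
    nlinarith [h2, hsm, hs0, h]
  -- conclude
  rw [hXstar]
  refine ⟨hxhatX, fun y hy => ?_⟩
  have hlow : Tendsto (fun j => -(((1 + γ * L) * (‖y‖ + M') / γ) * ε j)) atTop (nhds 0) := by
    simpa using (hres.const_mul ((1 + γ * L) * (‖y‖ + M') / γ)).neg
  have hupto : Tendsto (fun j => ⟪F (ζ j), y - ζ j⟫) atTop (nhds ⟪F xhat, y - xhat⟫) := by
    have h1 : Tendsto (fun j => ⟪F (ζ j), y - xhat⟫ + (-(⟪F (ζ j), ζ j - xhat⟫)))
        atTop (nhds (⟪F xhat, y - xhat⟫ + (-(-m)))) := (hFz (y - xhat)).add hinto.neg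
    have heq : ∀ j, ⟪F (ζ j), y - ζ j⟫
        = ⟪F (ζ j), y - xhat⟫ + (-(⟪F (ζ j), ζ j - xhat⟫)) := by
      intro j
      rw [← inner_neg_right, ← inner_add_right, neg_sub, sub_add_sub_cancel]
    have hval : ⟪F xhat, y - xhat⟫ + (-(-m)) = ⟪F xhat, y - xhat⟫ := by
      rw [hmzero]; ring
    rw [← hval]
    simpa only [heq] using h1
  exact le_of_tendsto_of_tendsto' hlow hupto (fun j => hkey y hy j)
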